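/- arXiv:0706.3971 — 2 statements merged into one kernel-verified Lean document; each statement's English description precedes it below -/
import Mathlib

section
/- For any surjective homomorphism π: G → Q between finitely generated groups and any finite symmetric generating set S of G, the ℓ^p-isoperimetric profile in balls satisfies J_{G,S,p}(n) ≤ J_{Q,π(S),p}(n) for all n, where J_{G,S,p}(n) is the supremum over functions f ∈ ℓ^p(G) supported in the ball B(1,n) of ‖f‖_p / sup_{s∈S} ‖λ(s)f − f‖_p. -/
open scoped ENNReal

/-- Word length with respect to a generating set `S`. -/
noncomputable def wordLength {G : Type*} [Group G] (S : Set G) (g : G) : ℕ :=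
  sInf {n | ∃ l : List G, l.length = n ∧ (∀ x ∈ l, x ∈ S) ∧ l.prod = g}

/-- The `ℓᵖ` norm of a function (with values in `ℝ≥0∞`). -/
noncomputable def epnorm {G : Type*} (p : ℝ) (f : G → ℝ) : ℝ≥0∞ :=
  (∑' x, ENNReal.ofReal (|f x| ^ p)) ^ (1 / p)

/-- The `ℓᵖ`-isoperimetric profile in balls `J_{G,S,p}(n)`: the supremum over functions
supported in the open ball `B(1,n)` of `‖f‖_p / sup_{s ∈ S} ‖λ(s)f - f‖_p`. -/
noncomputable def isoProfile (G : Type*) [Group G] (S : Set G) (p : ℝ) (n : ℕ) : ℝ≥0∞ :=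
  ⨆ f : {f : G → ℝ // ∀ x, f x ≠ 0 → wordLength S x < n},
    epnorm p f.1 / ⨆ s ∈ S, epnorm p (fun x => f.1 (s⁻¹ * x) - f.1 x)

section Aux

lemma iso_repSet_nonempty {G : Type*} [Group G] {S : Set G}
    (hSsym : ∀ s ∈ S, s⁻¹ ∈ S) (hSgen : Subgroup.closure S = ⊤) (g : G) :
    ∃ l : List G, (∀ x ∈ l, x ∈ S) ∧ l.prod = g := by
  have hg : g ∈ (Subgroup.closure S).toSubmonoid := by
    rw [hSgen]; trivial
  rw [Subgroup.closure_toSubmonoid] at hg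
  obtain ⟨l, hl, hprod⟩ := Submonoid.exists_list_of_mem_closure hg
  refine ⟨l, fun x hx => ?_, hprod⟩
  rcases hl x hx with h | h
  · exact h
  · have : x⁻¹ ∈ S := Set.mem_inv.mp h
    simpa using hSsym x⁻¹ this

lemma iso_exists_list_of_wordLength_lt {G : Type*} [Group G] {S : Set G}
    (hSsym : ∀ s ∈ S, s⁻¹ ∈ S) (hSgen : Subgroup.closure S = ⊤) {g : G} {n : ℕ}
    (h : wordLength S g < n) :
    ∃ l : List G, l.length < n ∧ (∀ x ∈ l, x ∈ S) ∧ l.prod = g := by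
  have hne : {m | ∃ l : List G, l.length = m ∧ (∀ x ∈ l, x ∈ S) ∧ l.prod = g}.Nonempty := by
    obtain ⟨l, hl, hp⟩ := iso_repSet_nonempty hSsym hSgen g
    exact ⟨l.length, l, rfl, hl, hp⟩
  obtain ⟨l, hlen, hmem, hprod⟩ := Nat.sInf_mem hne
  exact ⟨l, by rw [hlen]; exact h, hmem, hprod⟩

lemma iso_ball_finite {G : Type*} [Group G] {S : Set G} (hSfin : S.Finite)
    (hSsym : ∀ s ∈ S, s⁻¹ ∈ S) (hSgen : Subgroup.closure S = ⊤) (n : ℕ) :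
    {x : G | wordLength S x < n}.Finite := by
  have key : ∀ m : ℕ,
      {x : G | ∃ l : List G, l.length < m ∧ (∀ y ∈ l, y ∈ S) ∧ l.prod = x}.Finite := by
    intro m
    induction m with
    | zero =>
      convert Set.finite_empty
      ext x; simp
    | succ m ih =>
      apply Set.Finite.subset
        (Set.Finite.insert (1 : G) (hSfin.biUnion fun s _ => ih.image fun y => s * y))
      rintro x ⟨l, hlen, hmem, rfl⟩
      cases l with
      | nil => simp
      | cons a t =>
        refine Set.mem_insert_of_mem _ ?_
        refine Set.mem_biUnion (hmem a (by simp)) ?_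
        refine ⟨t.prod, ⟨t, Nat.lt_of_succ_lt_succ hlen,
          fun y hy => hmem y (List.mem_cons_of_mem _ hy), rfl⟩, by simp⟩
  refine (key n).subset fun x hx => ?_
  obtain ⟨l, hlen, hmem, hprod⟩ := iso_exists_list_of_wordLength_lt hSsym hSgen hx
  exact ⟨l, hlen, hmem, hprod⟩

lemma iso_wordLength_map {G Q : Type*} [Group G] [Group Q] (π : G →* Q) {S : Set G}
    (hSsym : ∀ s ∈ S, s⁻¹ ∈ S) (hSgen : Subgroup.closure S = ⊤) {g : G} {n : ℕ}
    (h : wordLength S g < n) :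
    wordLength (π '' S) (π g) < n := by
  obtain ⟨l, hlen, hmem, hprod⟩ := iso_exists_list_of_wordLength_lt hSsym hSgen h
  have hle : wordLength (π '' S) (π g) ≤ (l.map π).length := by
    apply Nat.sInf_le
    refine ⟨l.map π, rfl, ?_, ?_⟩
    · intro x hx
      obtain ⟨y, hy, rfl⟩ := List.mem_map.mp hx
      exact ⟨y, hmem y hy, rfl⟩
    · exact (map_list_prod π l).symm.trans (congrArg π hprod)
  calc wordLength (π '' S) (π g) ≤ (l.map π).length := hle
    _ = l.length := List.length_map _
    _ < n := hlen

/-- Minkowski's inequality for `tsum` in `ℝ≥0∞`. -/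
lemma iso_minkowski_tsum {ι : Type*} {p : ℝ} (hp : 1 ≤ p) (u v : ι → ℝ≥0∞) :
    (∑' i, (u i + v i) ^ p) ^ (1 / p) ≤
      (∑' i, u i ^ p) ^ (1 / p) + (∑' i, v i ^ p) ^ (1 / p) := by
  have hp0 : 0 < p := lt_of_lt_of_le one_pos hp
  set R := (∑' i, u i ^ p) ^ (1 / p) + (∑' i, v i ^ p) ^ (1 / p) with hR
  have key : (∑' i, (u i + v i) ^ p) ≤ R ^ p := by
    rw [ENNReal.tsum_eq_iSup_sum]
    apply iSup_le
    intro s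
    have h1 : (∑ i ∈ s, (u i + v i) ^ p) ^ (1 / p) ≤ R := by
      refine (ENNReal.Lp_add_le s u v hp).trans (add_le_add ?_ ?_) <;>
        exact ENNReal.rpow_le_rpow (ENNReal.sum_le_tsum s) (by positivity)
    calc (∑ i ∈ s, (u i + v i) ^ p)
        = ((∑ i ∈ s, (u i + v i) ^ p) ^ (1 / p)) ^ p := by
          rw [← ENNReal.rpow_mul, one_div, inv_mul_cancel₀ hp0.ne', ENNReal.rpow_one]
      _ ≤ R ^ p := ENNReal.rpow_le_rpow h1 hp0.le
  calc (∑' i, (u i + v i) ^ p) ^ (1 / p) ≤ (R ^ p) ^ (1 / p) :=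
        ENNReal.rpow_le_rpow key (by positivity)
    _ = R := by
        rw [← ENNReal.rpow_mul, mul_one_div, div_self hp0.ne', ENNReal.rpow_one]

lemma iso_tri {ι : Type*} {p : ℝ} (hp : 1 ≤ p) (a b : ι → ℝ) :
    (∑' i, ENNReal.ofReal (|a i| ^ p)) ^ (1 / p) ≤
      (∑' i, ENNReal.ofReal (|b i| ^ p)) ^ (1 / p) +
        (∑' i, ENNReal.ofReal (|a i - b i| ^ p)) ^ (1 / p) := by
  have hp0 : 0 < p := lt_of_lt_of_le one_pos hp
  have h1 : ∀ i, ENNReal.ofReal (|a i| ^ p) ≤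
      (ENNReal.ofReal |b i| + ENNReal.ofReal |a i - b i|) ^ p := by
    intro i
    rw [← ENNReal.ofReal_add (abs_nonneg _) (abs_nonneg _),
      ← ENNReal.ofReal_rpow_of_nonneg (abs_nonneg _) hp0.le]
    refine ENNReal.rpow_le_rpow (ENNReal.ofReal_le_ofReal ?_) hp0.le
    calc |a i| = |b i + (a i - b i)| := by ring_nf
      _ ≤ |b i| + |a i - b i| := abs_add_le _ _
  calc (∑' i, ENNReal.ofReal (|a i| ^ p)) ^ (1 / p)
      ≤ (∑' i, (ENNReal.ofReal |b i| + ENNReal.ofReal |a i - b i|) ^ p) ^ (1 / p) :=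
        ENNReal.rpow_le_rpow (ENNReal.tsum_le_tsum h1) (by positivity)
    _ ≤ (∑' i, ENNReal.ofReal |b i| ^ p) ^ (1 / p) +
          (∑' i, ENNReal.ofReal |a i - b i| ^ p) ^ (1 / p) := iso_minkowski_tsum hp _ _
    _ = (∑' i, ENNReal.ofReal (|b i| ^ p)) ^ (1 / p) +
          (∑' i, ENNReal.ofReal (|a i - b i| ^ p)) ^ (1 / p) := by
        congr 1 <;> · congr 1; exact tsum_congr fun i =>
          ENNReal.ofReal_rpow_of_nonneg (abs_nonneg _) hp0.le

/-- The key pointwise (per-fiber) inequality: reverse triangle inequality for `ℓᵖ` norms. -/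
lemma iso_key_fiber {ι : Type*} {p : ℝ} (hp : 1 ≤ p) (u v : ι → ℝ)
    (hu : (∑' i, ENNReal.ofReal (|u i| ^ p)) ^ (1 / p) ≠ ⊤)
    (hv : (∑' i, ENNReal.ofReal (|v i| ^ p)) ^ (1 / p) ≠ ⊤) :
    ENNReal.ofReal (|((∑' i, ENNReal.ofReal (|u i| ^ p)) ^ (1 / p)).toReal -
        ((∑' i, ENNReal.ofReal (|v i| ^ p)) ^ (1 / p)).toReal| ^ p) ≤
      ∑' i, ENNReal.ofReal (|u i - v i| ^ p) := by
  have hp0 : 0 < p := lt_of_lt_of_le one_pos hp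
  set Nu := (∑' i, ENNReal.ofReal (|u i| ^ p)) ^ (1 / p) with hNu
  set Nv := (∑' i, ENNReal.ofReal (|v i| ^ p)) ^ (1 / p) with hNv
  set Nd := (∑' i, ENNReal.ofReal (|u i - v i| ^ p)) ^ (1 / p) with hNd
  by_cases hd : Nd = ⊤
  · have : (∑' i, ENNReal.ofReal (|u i - v i| ^ p)) = ⊤ := by
      rw [hNd] at hd
      exact (ENNReal.rpow_eq_top_iff_of_pos (by positivity)).mp hd
    simp [this]
  have h1 : Nu ≤ Nv + Nd := iso_tri hp u v
  have h2 : Nv ≤ Nu + Nd := by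
    have := iso_tri hp v u
    have heq : (∑' i, ENNReal.ofReal (|v i - u i| ^ p)) =
        (∑' i, ENNReal.ofReal (|u i - v i| ^ p)) :=
      tsum_congr fun i => by rw [abs_sub_comm]
    rw [heq] at this
    exact this
  have hxy : Nu.toReal ≤ Nv.toReal + Nd.toReal := by
    have := ENNReal.toReal_mono (ENNReal.add_ne_top.2 ⟨hv, hd⟩) h1
    rwa [ENNReal.toReal_add hv hd] at this
  have hyx : Nv.toReal ≤ Nu.toReal + Nd.toReal := by
    have := ENNReal.toReal_mono (ENNReal.add_ne_top.2 ⟨hu, hd⟩) h2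
    rwa [ENNReal.toReal_add hu hd] at this
  have habs : |Nu.toReal - Nv.toReal| ≤ Nd.toReal :=
    abs_sub_le_iff.2 ⟨by linarith, by linarith⟩
  calc ENNReal.ofReal (|Nu.toReal - Nv.toReal| ^ p)
      ≤ ENNReal.ofReal (Nd.toReal ^ p) :=
        ENNReal.ofReal_le_ofReal (Real.rpow_le_rpow (abs_nonneg _) habs hp0.le)
    _ = ENNReal.ofReal Nd.toReal ^ p :=
        (ENNReal.ofReal_rpow_of_nonneg ENNReal.toReal_nonneg hp0.le).symm
    _ = Nd ^ p := by rw [ENNReal.ofReal_toReal hd]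
    _ = ∑' i, ENNReal.ofReal (|u i - v i| ^ p) := by
        rw [hNd, ← ENNReal.rpow_mul, one_div, inv_mul_cancel₀ hp0.ne', ENNReal.rpow_one]

/-- Shifting the fiber: `π⁻¹((π s)⁻¹ q) = s⁻¹ · π⁻¹(q)`. -/
def iso_fiberShift {G Q : Type*} [Group G] [Group Q] (π : G →* Q) (s : G) (q : Q) :
    {g : G // π g = q} ≃ {g : G // π g = (π s)⁻¹ * q} where
  toFun g := ⟨s⁻¹ * g.1, by rw [map_mul, map_inv, g.2]⟩
  invFun h := ⟨s * h.1, by rw [map_mul, h.2, mul_inv_cancel_left]⟩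
  left_inv g := by ext; simp
  right_inv h := by ext; simp

end Aux

theorem isoProfile_le_of_surjective {G Q : Type*} [Group G] [Group Q] (π : G →* Q)
    (hsurj : Function.Surjective π) (S : Set G) (hSfin : S.Finite)
    (hSsym : ∀ s ∈ S, s⁻¹ ∈ S) (hSgen : Subgroup.closure S = ⊤)
    (p : ℝ) (hp : 1 ≤ p) (n : ℕ) :
    isoProfile G S p n ≤ isoProfile Q (π '' S) p n := by
  have hp0 : 0 < p := lt_of_lt_of_le one_pos hp
  rw [isoProfile, isoProfile]
  refine iSup_le ?_
  rintro ⟨f, hf⟩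
  -- the pushforward function
  set c : G → ℝ≥0∞ := fun g => ENNReal.ofReal (|f g| ^ p) with hc
  have hc0 : ∀ g, f g = 0 → c g = 0 := by
    intro g hg
    simp [hc, hg, Real.zero_rpow hp0.ne']
  -- the total sum is finite
  have hsupp : (Function.support f).Finite :=
    (iso_ball_finite hSfin hSsym hSgen n).subset fun x hx => hf x hx
  have hT : (∑' g : G, c g) ≠ ⊤ := by
    rw [tsum_eq_sum (s := hsupp.toFinset) (fun b hb => hc0 b (by simpa using hb))]
    exact (ENNReal.sum_lt_top.2 fun a _ => ENNReal.ofReal_lt_top).ne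
  set A : Q → ℝ≥0∞ := fun q => (∑' g : {g : G // π g = q}, c g.1) ^ (1 / p) with hA
  have hAfibfin : ∀ q : Q, (∑' g : {g : G // π g = q}, c g.1) ≠ ⊤ := by
    intro q
    refine ne_top_of_le_ne_top hT ?_
    exact ENNReal.tsum_comp_le_tsum_of_injective Subtype.val_injective c
  have hAfin : ∀ q, A q ≠ ⊤ := fun q =>
    (ENNReal.rpow_lt_top_of_nonneg (by positivity) (hAfibfin q)).ne
  set F : Q → ℝ := fun q => (A q).toReal with hF
  have hAq : ∀ q : Q, A q = (∑' g : {g : G // π g = q}, c g.1) ^ (1 / p) := fun q => rfl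
  have hFdef : ∀ q : Q, F q = (A q).toReal := fun q => rfl
  -- support condition
  have hFsupp : ∀ q, F q ≠ 0 → wordLength (π '' S) q < n := by
    intro q hq
    have hA0 : A q ≠ 0 := fun h => hq (by simp [hF, h])
    have hsum0 : (∑' g : {g : G // π g = q}, c g.1) ≠ 0 := by
      intro h
      exact hA0 (by rw [hAq, h, ENNReal.zero_rpow_of_pos (by positivity)])
    have : ∃ g : {g : G // π g = q}, c g.1 ≠ 0 := by
      by_contra h
      push_neg at h
      exact hsum0 ((tsum_congr h).trans tsum_zero)
    obtain ⟨⟨g, hg⟩, hcg⟩ := this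
    have hfg : f g ≠ 0 := fun h => hcg (hc0 g h)
    have := iso_wordLength_map π hSsym hSgen (hf g hfg)
    rwa [hg] at this
  -- norms are equal
  have hApow : ∀ q, A q ^ p = ∑' g : {g : G // π g = q}, c g.1 := by
    intro q
    rw [hAq, ← ENNReal.rpow_mul, one_div, inv_mul_cancel₀ hp0.ne', ENNReal.rpow_one]
  have hFq : ∀ q, ENNReal.ofReal (|F q| ^ p) = ∑' g : {g : G // π g = q}, c g.1 := by
    intro q
    rw [hFdef, abs_of_nonneg ENNReal.toReal_nonneg,
      ← ENNReal.ofReal_rpow_of_nonneg ENNReal.toReal_nonneg hp0.le,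
      ENNReal.ofReal_toReal (hAfin q), hApow]
  have hfib : ∀ d : G → ℝ≥0∞,
      (∑' q : Q, ∑' g : {g : G // π g = q}, d g.1) = ∑' g : G, d g := by
    intro d
    rw [← ENNReal.tsum_sigma' (fun x : Σ q : Q, {g : G // π g = q} => d x.2.1)]
    exact (Equiv.sigmaFiberEquiv π).tsum_eq d
  have hnorm : epnorm p F = epnorm p f := by
    rw [epnorm, epnorm]
    congr 1
    rw [tsum_congr hFq, hfib]
  -- gradient inequality
  have hgrad : ∀ s ∈ S,
      epnorm p (fun q => F ((π s)⁻¹ * q) - F q) ≤ epnorm p (fun x => f (s⁻¹ * x) - f x) := by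
    intro s _
    rw [epnorm, epnorm]
    refine ENNReal.rpow_le_rpow ?_ (by positivity)
    have key : ∀ q : Q, ENNReal.ofReal (|F ((π s)⁻¹ * q) - F q| ^ p) ≤
        ∑' g : {g : G // π g = q}, ENNReal.ofReal (|f (s⁻¹ * g.1) - f g.1| ^ p) := by
      intro q
      have hshift : (∑' g : {g : G // π g = q}, ENNReal.ofReal (|f (s⁻¹ * g.1)| ^ p)) =
          ∑' h : {g : G // π g = (π s)⁻¹ * q}, c h.1 := by
        exact ((iso_fiberShift π s q).tsum_eq
          (fun h : {g : G // π g = (π s)⁻¹ * q} => c h.1))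
      have hu : (∑' g : {g : G // π g = q},
          ENNReal.ofReal (|f (s⁻¹ * g.1)| ^ p)) ^ (1 / p) ≠ ⊤ := by
        rw [hshift]; exact hAfin _
      have hv : (∑' g : {g : G // π g = q},
          ENNReal.ofReal (|f g.1| ^ p)) ^ (1 / p) ≠ ⊤ := hAfin q
      have h := iso_key_fiber hp (fun g : {g : G // π g = q} => f (s⁻¹ * g.1))
        (fun g : {g : G // π g = q} => f g.1) hu hv
      have hFq' : F ((π s)⁻¹ * q) = ((∑' g : {g : G // π g = q},
          ENNReal.ofReal (|f (s⁻¹ * g.1)| ^ p)) ^ (1 / p)).toReal := by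
        rw [hFdef, hAq, hshift]
      have hFq2 : F q = ((∑' g : {g : G // π g = q},
          ENNReal.ofReal (|f g.1| ^ p)) ^ (1 / p)).toReal := by rw [hFdef, hAq]
      rw [hFq', hFq2]
      exact h
    calc (∑' q : Q, ENNReal.ofReal (|F ((π s)⁻¹ * q) - F q| ^ p))
        ≤ ∑' q : Q, ∑' g : {g : G // π g = q},
            ENNReal.ofReal (|f (s⁻¹ * g.1) - f g.1| ^ p) := ENNReal.tsum_le_tsum key
      _ = ∑' x : G, ENNReal.ofReal (|f (s⁻¹ * x) - f x| ^ p) :=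
          hfib (fun x => ENNReal.ofReal (|f (s⁻¹ * x) - f x| ^ p))
  -- supremum over generators
  have hsup : (⨆ t ∈ π '' S, epnorm p (fun q => F (t⁻¹ * q) - F q)) ≤
      ⨆ s ∈ S, epnorm p (fun x => f (s⁻¹ * x) - f x) := by
    refine iSup₂_le ?_
    rintro t ⟨s, hs, rfl⟩
    exact le_trans (hgrad s hs) (le_iSup₂ (f := fun s _ =>
      epnorm p (fun x => f (s⁻¹ * x) - f x)) s hs)
  refine le_trans ?_ (le_iSup (fun F : {F : Q → ℝ // ∀ x, F x ≠ 0 → wordLength (π '' S) x < n} =>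
    epnorm p F.1 / ⨆ t ∈ π '' S, epnorm p (fun q => F.1 (t⁻¹ * q) - F.1 q)) ⟨F, hFsupp⟩)
  exact ENNReal.div_le_div (le_of_eq hnorm.symm) hsup
end

section
/- The diameter of the finite lamplighter group C_m ≀ C_n = (C_m)^{C_n} ⋊ C_n, with respect to the generating set S = {(±1₀, 0), (0, ±1)} where 1₀ ∈ (C_m)^{C_n} is the characteristic function of {0}, is at most (m+3)n. -/
/-- The shift automorphism of `(C_m)^{C_n}` by `k ∈ C_n`. -/
def lampShift (m n : ℕ) (k : ZMod n) : (ZMod n → ZMod m) ≃+ (ZMod n → ZMod m) where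
  toFun f j := f (j - k)
  invFun f j := f (j + k)
  left_inv f := by ext j; simp
  right_inv f := by ext j; simp
  map_add' f g := rfl

/-- The shift action of `C_n` on `(C_m)^{C_n}`. -/
def lampAction (m n : ℕ) :
    Multiplicative (ZMod n) →* MulAut (Multiplicative (ZMod n → ZMod m)) :=
  MonoidHom.mk' (fun k => AddEquiv.toMultiplicative (lampShift m n k.toAdd))
    (by
      intro a b
      apply MulEquiv.ext
      intro f
      apply funext
      intro j
      show f.toAdd (j - (a.toAdd + b.toAdd)) = f.toAdd (j - a.toAdd - b.toAdd)
      rw [sub_sub])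

/-- The lamplighter group `C_m ≀ C_n = (C_m)^{C_n} ⋊ C_n`. -/
abbrev Lamp (m n : ℕ) :=
  SemidirectProduct (Multiplicative (ZMod n → ZMod m)) (Multiplicative (ZMod n)) (lampAction m n)

/-- The generating set `S = {(±1₀, 0), (0, ±1)}` of the lamplighter group. -/
def lampS (m n : ℕ) : Set (Lamp m n) :=
  {SemidirectProduct.inl (Multiplicative.ofAdd (Pi.single (0 : ZMod n) (1 : ZMod m))),
   SemidirectProduct.inl (Multiplicative.ofAdd (Pi.single (0 : ZMod n) (-1 : ZMod m))),
   SemidirectProduct.inr (Multiplicative.ofAdd (1 : ZMod n)),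
   SemidirectProduct.inr (Multiplicative.ofAdd (-1 : ZMod n))}

section Aux

open SemidirectProduct Multiplicative Finset

/-- `g` can be represented by a word in `S` of length at most `c`. -/
def LRep {G : Type*} [Group G] (S : Set G) (g : G) (c : ℕ) : Prop :=
  ∃ l : List G, l.length ≤ c ∧ (∀ x ∈ l, x ∈ S) ∧ l.prod = g

lemma lrep_mono {G : Type*} [Group G] {S : Set G} {g : G} {c d : ℕ}
    (h : LRep S g c) (hcd : c ≤ d) : LRep S g d := by
  obtain ⟨l, h1, h2, h3⟩ := h
  exact ⟨l, h1.trans hcd, h2, h3⟩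

lemma lrep_mul {G : Type*} [Group G] {S : Set G} {g h : G} {c d : ℕ}
    (hg : LRep S g c) (hh : LRep S h d) : LRep S (g * h) (c + d) := by
  obtain ⟨l, h1, h2, h3⟩ := hg
  obtain ⟨l', h1', h2', h3'⟩ := hh
  refine ⟨l ++ l', by simp; omega, ?_, by simp [h3, h3']⟩
  intro x hx
  rcases List.mem_append.1 hx with h | h
  · exact h2 x h
  · exact h2' x h

lemma lrep_pow {G : Type*} [Group G] {S : Set G} {g : G} (hg : g ∈ S) (k : ℕ) :
    LRep S (g ^ k) k := by
  refine ⟨List.replicate k g, by simp, ?_, by simp⟩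
  intro x hx
  rw [List.eq_of_mem_replicate hx]
  exact hg

lemma wordLength_le_of_rep {G : Type*} [Group G] {S : Set G} {g : G} {c : ℕ}
    (h : LRep S g c) : wordLength S g ≤ c := by
  obtain ⟨l, h1, h2, h3⟩ := h
  exact le_trans (Nat.sInf_le ⟨l, rfl, h2, h3⟩) h1

variable (m n : ℕ) [NeZero m] [NeZero n]

lemma lrep_inr (k : ZMod n) :
    LRep (lampS m n) (inr (ofAdd k) : Lamp m n) k.val := by
  have h : (inr (ofAdd k) : Lamp m n) = (inr (ofAdd (1 : ZMod n))) ^ k.val := by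
    rw [← map_pow, ← ofAdd_nsmul]
    congr 1
    simp [nsmul_eq_mul, ZMod.natCast_val, ZMod.cast_id]
  rw [h]
  exact lrep_pow (by simp [lampS]) _

lemma lrep_lamp (a : ZMod m) :
    LRep (lampS m n) (inl (ofAdd (Pi.single (0 : ZMod n) a)) : Lamp m n) a.val := by
  have hsingle : Pi.single (0 : ZMod n) a
      = a.val • (Pi.single (0 : ZMod n) (1 : ZMod m) : ZMod n → ZMod m) := by
    funext j
    rcases eq_or_ne j 0 with rfl | hj
    · simp [ZMod.natCast_val, ZMod.cast_id]
    · simp [Pi.single_apply, hj]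
  rw [hsingle, ofAdd_nsmul, map_pow]
  exact lrep_pow (by simp [lampS]) _

lemma shift_single (N : ZMod n) (a : ZMod m) :
    lampShift m n N (Pi.single (0 : ZMod n) a) = Pi.single N a := by
  funext j
  simp only [lampShift, AddEquiv.coe_mk, Equiv.coe_fn_mk]
  simp [Pi.single_apply, sub_eq_zero]

lemma lrep_partial (f : ZMod n → ZMod m) (N : ℕ) :
    LRep (lampS m n)
      (inl (ofAdd (∑ j ∈ Finset.range N, Pi.single ((j : ZMod n)) (f (j : ZMod n))))
        * inr (ofAdd (N : ZMod n)) : Lamp m n) (m * N) := by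
  induction N with
  | zero => exact ⟨[], by simp, by simp, by simp⟩
  | succ N ih =>
    have key : (inl (ofAdd (∑ j ∈ Finset.range (N + 1), Pi.single ((j : ZMod n)) (f (j : ZMod n))))
          * inr (ofAdd ((N + 1 : ℕ) : ZMod n)) : Lamp m n)
        = (inl (ofAdd (∑ j ∈ Finset.range N, Pi.single ((j : ZMod n)) (f (j : ZMod n))))
            * inr (ofAdd (N : ZMod n)))
          * (inl (ofAdd (Pi.single (0 : ZMod n) (f (N : ZMod n))))
            * inr (ofAdd (1 : ZMod n))) := by
      have haction : ∀ (t : ZMod n) (x : ZMod n → ZMod m),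
          (lampAction m n) (ofAdd t) (ofAdd x) = ofAdd (lampShift m n t x) := fun _ _ => rfl
      ext
      · simp [Finset.sum_range_succ, haction, shift_single]
      · simp
        try push_cast
        try ring
    rw [key]
    have h1 := lrep_lamp m n (f (N : ZMod n))
    have h2 := lrep_inr m n (1 : ZMod n)
    have hval : (f (N : ZMod n)).val + (1 : ZMod n).val ≤ m := by
      have h1 := (f (N : ZMod n)).val_lt
      have h2 : (1 : ZMod n).val ≤ 1 := by
        rw [ZMod.val_one_eq_one_mod]; exact Nat.mod_le 1 n
      have h3 : 0 < m := Nat.pos_of_ne_zero (NeZero.ne m)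
      omega
    have := lrep_mul ih (lrep_mul h1 h2)
    refine lrep_mono this ?_
    have : m * (N + 1) = m * N + m := by ring
    omega

end Aux

theorem lamp_diam_le (m n : ℕ) (hm : 2 ≤ m) (hn : 1 ≤ n) (g : Lamp m n) :
    wordLength (lampS m n) g ≤ (m + 3) * n := by
  have : NeZero m := ⟨by omega⟩
  have : NeZero n := ⟨by omega⟩
  open SemidirectProduct Multiplicative in
  have hsum : (∑ j ∈ Finset.range n, Pi.single ((j : ZMod n)) (g.left.toAdd (j : ZMod n)))
      = g.left.toAdd := by
    have h1 : (∑ j ∈ Finset.range n, Pi.single ((j : ZMod n)) (g.left.toAdd (j : ZMod n)))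
        = ∑ t : ZMod n, Pi.single t (g.left.toAdd t) :=
      Finset.sum_nbij' (i := fun j : ℕ => (j : ZMod n)) (j := fun t : ZMod n => t.val)
        (fun a _ => Finset.mem_univ _)
        (fun a _ => Finset.mem_range.2 (ZMod.val_lt a))
        (fun a ha => ZMod.val_cast_of_lt (Finset.mem_range.1 ha))
        (fun a _ => by simp [ZMod.natCast_val, ZMod.cast_id])
        (fun a _ => rfl)
    rw [h1]
    exact Finset.univ_sum_single _
  have hdecomp : g = (SemidirectProduct.inl (Multiplicative.ofAdd
        (∑ j ∈ Finset.range n, Pi.single ((j : ZMod n)) (g.left.toAdd (j : ZMod n))))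
      * SemidirectProduct.inr (Multiplicative.ofAdd ((n : ℕ) : ZMod n)))
      * SemidirectProduct.inr (Multiplicative.ofAdd g.right.toAdd) := by
    rw [hsum, ZMod.natCast_self]
    simpa using (SemidirectProduct.inl_left_mul_inr_right g).symm
  have h1 := lrep_partial m n (fun t => g.left.toAdd t) n
  have h2 := lrep_inr m n g.right.toAdd
  have h := lrep_mul h1 h2
  rw [← hdecomp] at h
  refine le_trans (wordLength_le_of_rep h) ?_
  have := (g.right.toAdd).val_lt
  nlinarith
end
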